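/- The symplectic group Sp(2g, F₂) acts transitively on the set of even quadratic forms, and transitively on the set of odd quadratic forms, on a 2g-dimensional symplectic F₂-vector space; i.e., the orbits of Q(V) under γ·q(v) := q(γ⁻¹v) are exactly the level sets of the Arf invariant. -/

import Mathlib

open Sum Finset
open Module

/-- `q` is a quadratic form refining the symplectic form `ω`. -/
def IsQuadraticRefinement {V : Type*} [AddCommGroup V] [Module (ZMod 2) V]
    (ω : V →ₗ[ZMod 2] V →ₗ[ZMod 2] ZMod 2) (q : V → ZMod 2) : Prop :=
  ∀ v w, q (v + w) = q v + q w + ω v w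

/-- A basis indexed by `Fin g ⊕ Fin g` is symplectic for `ω`. -/
def IsSymplecticBasis {V : Type*} [AddCommGroup V] [Module (ZMod 2) V] {g : ℕ}
    (ω : V →ₗ[ZMod 2] V →ₗ[ZMod 2] ZMod 2)
    (b : Basis (Fin g ⊕ Fin g) (ZMod 2) V) : Prop :=
  (∀ i j, ω (b (Sum.inl i)) (b (Sum.inr j)) = if i = j then 1 else 0) ∧
  (∀ i j, ω (b (Sum.inl i)) (b (Sum.inl j)) = 0) ∧
  (∀ i j, ω (b (Sum.inr i)) (b (Sum.inr j)) = 0)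

/-- The Arf invariant of `q` with respect to the symplectic basis `b`. -/
noncomputable def arfInvariant {V : Type*} [AddCommGroup V] [Module (ZMod 2) V] {g : ℕ}
    (b : Basis (Fin g ⊕ Fin g) (ZMod 2) V) (q : V → ZMod 2) : ZMod 2 :=
  ∑ i : Fin g, q (b (Sum.inl i)) * q (b (Sum.inr i))

section Arf

variable {V : Type*} [AddCommGroup V] [Module (ZMod 2) V] {g : ℕ}
variable {ω : V →ₗ[ZMod 2] V →ₗ[ZMod 2] ZMod 2} {q : V → ZMod 2}

lemma zmod2_cases (x : ZMod 2) : x = 0 ∨ x = 1 := by revert x; decide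

lemma IQR.zero (hq : IsQuadraticRefinement ω q) : q 0 = 0 := by
  have h := hq 0 0; simpa using h

lemma IQR.omega_symm (hq : IsQuadraticRefinement ω q) (v w : V) : ω v w = ω w v := by
  have h1 := hq v w
  have h2 := hq w v
  rw [add_comm w v] at h2
  rw [h1] at h2
  have : ∀ a b c d : ZMod 2, a + b + c = b + a + d → c = d := by decide
  exact this _ _ _ _ h2

lemma IQR.omega_self (hq : IsQuadraticRefinement ω q) (v : V) : ω v v = 0 := by
  have h := hq v v
  have hv : v + v = 0 := by
    have h2 : (2 : ZMod 2) = 0 := by decide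
    calc v + v = (2 : ZMod 2) • v := (two_smul _ v).symm
    _ = 0 := by rw [h2, zero_smul]
  rw [hv, IQR.zero hq] at h
  have : ∀ a c : ZMod 2, 0 = a + a + c → c = 0 := by decide
  exact this _ _ h

lemma IQR.smul (hq : IsQuadraticRefinement ω q) (x : ZMod 2) (v : V) :
    q (x • v) = x * q v := by
  rcases zmod2_cases x with h | h <;> subst h
  · simpa using IQR.zero hq
  · simp

lemma IQR.comb (hq : IsQuadraticRefinement ω q) (x y : ZMod 2) (v w : V) :
    q (x • v + y • w) = x * q v + y * q w + x * y * ω v w := by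
  rw [hq, IQR.smul hq, IQR.smul hq]
  simp [smul_eq_mul, mul_comm, mul_left_comm, mul_assoc]

/-- sum of pairwise ω-orthogonal vectors -/
lemma IQR.sum_orth (hq : IsQuadraticRefinement ω q) {ι : Type*} [DecidableEq ι]
    (s : Finset ι) (w : ι → V)
    (h : ∀ i ∈ s, ∀ j ∈ s, i ≠ j → ω (w i) (w j) = 0) :
    q (∑ i ∈ s, w i) = ∑ i ∈ s, q (w i) := by
  induction s using Finset.cons_induction with
  | empty => simpa using IQR.zero hq
  | cons a s ha ih =>
    rw [Finset.sum_cons, Finset.sum_cons, hq]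
    rw [ih (fun i hi j hj hij => h i (Finset.mem_cons_of_mem hi) j (Finset.mem_cons_of_mem hj) hij)]
    have : ω (w a) (∑ i ∈ s, w i) = 0 := by
      rw [map_sum]
      apply Finset.sum_eq_zero
      intro j hj
      exact h a (Finset.mem_cons_self a s) j (Finset.mem_cons_of_mem hj)
        (fun e => ha (e ▸ hj))
    rw [this, add_zero]

end Arf

section Counting

variable {V : Type*} [AddCommGroup V] [Module (ZMod 2) V] {g : ℕ}
variable {ω : V →ₗ[ZMod 2] V →ₗ[ZMod 2] ZMod 2} {q : V → ZMod 2}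

/-- sign character -/
def chi (x : ZMod 2) : ℤ := if x = 0 then 1 else -1

lemma chi_add (x y : ZMod 2) : chi (x + y) = chi x * chi y := by revert x y; decide

lemma chi_inj {x y : ZMod 2} (h : chi x = chi y) : x = y := by revert x y; decide

lemma chi_sum {ι : Type*} (s : Finset ι) (f : ι → ZMod 2) :
    chi (∑ i ∈ s, f i) = ∏ i ∈ s, chi (f i) := by
  induction s using Finset.cons_induction with
  | empty => simp [chi]
  | cons a s ha ih => rw [Finset.sum_cons, Finset.prod_cons, chi_add, ih]

lemma plane_sum (α β : ZMod 2) :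
    ∑ z : ZMod 2 × ZMod 2, chi (z.1 * α + z.2 * β + z.1 * z.2) = 2 * chi (α * β) := by
  revert α β; decide

/-- The key counting identity. -/
lemma counting [Fintype V] (hq : IsQuadraticRefinement ω q)
    (c : Basis (Fin g ⊕ Fin g) (ZMod 2) V) (hc : IsSymplecticBasis ω c) :
    ∑ v : V, chi (q v) = 2 ^ g * chi (∑ i : Fin g, q (c (inl i)) * q (c (inr i))) := by
  classical
  obtain ⟨h1, h2, h3⟩ := hc
  -- reindex over coordinates
  rw [← Equiv.sum_comp c.equivFun.symm.toEquiv (fun v => chi (q v))]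
  simp only [LinearEquiv.coe_toEquiv]
  -- reindex over pairs of coordinates
  set e : (Fin g → ZMod 2 × ZMod 2) ≃ ((Fin g ⊕ Fin g) → ZMod 2) :=
    { toFun := fun h => Sum.elim (fun i => (h i).1) (fun i => (h i).2)
      invFun := fun f i => (f (inl i), f (inr i))
      left_inv := fun h => rfl
      right_inv := fun f => by funext j; cases j <;> rfl }
  rw [← Equiv.sum_comp e (fun f => chi (q (c.equivFun.symm f)))]
  have key : ∀ h : Fin g → ZMod 2 × ZMod 2,
      chi (q (c.equivFun.symm (e h))) =
      ∏ i : Fin g, chi ((h i).1 * q (c (inl i)) + (h i).2 * q (c (inr i)) + (h i).1 * (h i).2) := by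
    intro h
    have hv : c.equivFun.symm (e h) =
        ∑ i : Fin g, ((h i).1 • c (inl i) + (h i).2 • c (inr i)) := by
      rw [Basis.equivFun_symm_apply, Fintype.sum_sum_type, ← Finset.sum_add_distrib]
      rfl
    rw [hv, IQR.sum_orth hq]
    · rw [chi_sum]
      congr 1
      funext i
      congr 1
      rw [IQR.comb hq, h1 i i, if_pos rfl, mul_one]
    · intro i _ j _ hij
      simp only [map_add, map_smul, LinearMap.add_apply, LinearMap.smul_apply, smul_eq_mul]
      rw [h1 i j, if_neg hij, h2 i j, h3 i j, IQR.omega_symm hq (c (inr i)) (c (inl j)),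
        h1 j i, if_neg (Ne.symm hij)]
      ring
  rw [Finset.sum_congr rfl (fun h _ => key h)]
  rw [← Fintype.prod_sum (fun i (z : ZMod 2 × ZMod 2) =>
    chi (z.1 * q (c (inl i)) + z.2 * q (c (inr i)) + z.1 * z.2))]
  rw [Finset.prod_congr rfl (fun i _ => plane_sum (q (c (inl i))) (q (c (inr i))))]
  rw [Finset.prod_mul_distrib, Finset.prod_const, chi_sum]
  simp [Finset.card_univ]

end Counting

section Families

variable {V : Type*} [AddCommGroup V] [Module (ZMod 2) V] {g : ℕ}

/-- A family of vectors forming a symplectic system. -/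
def IsSympFam (ω : V →ₗ[ZMod 2] V →ₗ[ZMod 2] ZMod 2) (c : Fin g ⊕ Fin g → V) : Prop :=
  (∀ i j, ω (c (inl i)) (c (inr j)) = if i = j then 1 else 0) ∧
  (∀ i j, ω (c (inl i)) (c (inl j)) = 0) ∧
  (∀ i j, ω (c (inr i)) (c (inr j)) = 0)

variable {ω : V →ₗ[ZMod 2] V →ₗ[ZMod 2] ZMod 2} {q : V → ZMod 2}

lemma sympFam_li {c : Fin g ⊕ Fin g → V} (hc : IsSympFam ω c) :
    LinearIndependent (ZMod 2) c := by
  classical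
  rw [Fintype.linearIndependent_iff]
  intro t ht j
  have expand : ∀ w : V, ω (∑ k : Fin g ⊕ Fin g, t k • c k) w = ∑ k, t k * ω (c k) w := by
    intro w
    simp [map_sum, LinearMap.sum_apply]
  cases j with
  | inl i =>
    have h0 := congrArg (fun v => ω v (c (inr i))) ht
    simp only [map_zero, LinearMap.zero_apply] at h0
    rw [expand, Fintype.sum_sum_type] at h0
    simp only [hc.1, hc.2.2, mul_ite, mul_one, mul_zero, Finset.sum_ite_eq',
      Finset.mem_univ, if_pos, Finset.sum_const_zero, add_zero] at h0
    exact h0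
  | inr i =>
    have h0 := congrArg (fun v => ω (c (inl i)) v) ht
    simp only [map_zero] at h0
    rw [map_sum] at h0
    simp only [map_smul, smul_eq_mul] at h0
    rw [Fintype.sum_sum_type] at h0
    simp only [hc.1, hc.2.1, mul_ite, mul_one, mul_zero, Finset.sum_ite_eq,
      Finset.mem_univ, if_pos, Finset.sum_const_zero, zero_add] at h0
    exact h0

/-- Upgrade a symplectic family to a basis. -/
noncomputable def sympFamBasis (hg : 0 < g) (b : Basis (Fin g ⊕ Fin g) (ZMod 2) V)
    {c : Fin g ⊕ Fin g → V} (hc : IsSympFam ω c) : Basis (Fin g ⊕ Fin g) (ZMod 2) V :=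
  haveI : Nonempty (Fin g ⊕ Fin g) := ⟨inl ⟨0, hg⟩⟩
  basisOfLinearIndependentOfCardEqFinrank (sympFam_li hc)
    (Module.finrank_eq_card_basis b).symm

lemma sympFamBasis_coe (hg : 0 < g) (b : Basis (Fin g ⊕ Fin g) (ZMod 2) V)
    {c : Fin g ⊕ Fin g → V} (hc : IsSympFam ω c) : ⇑(sympFamBasis hg b hc) = c := by
  haveI : Nonempty (Fin g ⊕ Fin g) := ⟨inl ⟨0, hg⟩⟩
  exact coe_basisOfLinearIndependentOfCardEqFinrank _ _

end Families

section Part1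

variable {V : Type*} [AddCommGroup V] [Module (ZMod 2) V] {g : ℕ}
variable {ω : V →ₗ[ZMod 2] V →ₗ[ZMod 2] ZMod 2} {q : V → ZMod 2}

lemma part1 (b : Basis (Fin g ⊕ Fin g) (ZMod 2) V) (hb : IsSymplecticBasis ω b)
    (γ : V ≃ₗ[ZMod 2] V) (hγ : ∀ v w, ω (γ v) (γ w) = ω v w)
    (hq : IsQuadraticRefinement ω q) :
    IsQuadraticRefinement ω (fun v => q (γ.symm v)) ∧
    arfInvariant b (fun v => q (γ.symm v)) = arfInvariant b q := by
  have href : IsQuadraticRefinement ω (fun v => q (γ.symm v)) := by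
    intro v w
    simp only [map_add]
    rw [hq]
    have : ω (γ.symm v) (γ.symm w) = ω v w := by
      have := hγ (γ.symm v) (γ.symm w)
      simpa using this.symm
    rw [this]
  refine ⟨href, ?_⟩
  letI : Fintype V := Fintype.ofEquiv _ b.equivFun.toEquiv.symm
  have h1 := counting href b hb
  have h2 := counting hq b hb
  have h3 : ∑ v : V, chi (q (γ.symm v)) = ∑ v : V, chi (q v) := by
    have := Equiv.sum_comp γ.symm.toEquiv (fun v => chi (q v))
    simpa using this
  rw [h3, h2] at h1
  have h4 := mul_left_cancel₀ (a := (2:ℤ)^g) (by positivity) h1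
  simp only [arfInvariant]
  exact (chi_inj h4).symm

/-- Two refinements agreeing on a basis agree everywhere. -/
lemma refinement_ext {q q' : V → ZMod 2} {ι : Type*} (c : Basis ι (ZMod 2) V)
    (hq : IsQuadraticRefinement ω q) (hq' : IsQuadraticRefinement ω q')
    (h : ∀ j, q (c j) = q' (c j)) : ∀ v, q v = q' v := by
  let D : V →ₗ[ZMod 2] ZMod 2 :=
    { toFun := fun v => q v - q' v
      map_add' := by
        intro v w
        show q (v + w) - q' (v + w) = (q v - q' v) + (q w - q' w)
        rw [hq, hq']
        ring
      map_smul' := by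
        intro x v
        rcases zmod2_cases x with h | h <;> subst h
        · simp [IQR.zero hq, IQR.zero hq']
        · simp }
  have hD : D = 0 := by
    apply c.ext
    intro j
    simp [D, h j]
  intro v
  have := congrArg (fun f => f v) hD
  simp only [LinearMap.zero_apply] at this
  have h2 : q v - q' v = 0 := this
  have : ∀ a b : ZMod 2, a - b = 0 → a = b := by decide
  exact this _ _ h2

/-- A linear equivalence matching two symplectic bases is symplectic,
    provided ω is symmetric. -/
lemma symp_of_basis_map (hsym : ∀ v w : V, ω v w = ω w v)
    (c d : Basis (Fin g ⊕ Fin g) (ZMod 2) V)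
    (hc : IsSympFam ω ⇑c) (hd : IsSympFam ω ⇑d)
    (γ : V ≃ₗ[ZMod 2] V) (hγ : ∀ j, γ (c j) = d j) :
    ∀ v w, ω (γ v) (γ w) = ω v w := by
  have key : ∀ j k, ω (d j) (d k) = ω (c j) (c k) := by
    intro j k
    rcases j with i | i <;> rcases k with l | l
    · rw [hc.2.1, hd.2.1]
    · rw [hc.1, hd.1]
    · rw [hsym (d (inr i)) (d (inl l)), hsym (c (inr i)) (c (inl l)), hc.1, hd.1]
    · rw [hc.2.2, hd.2.2]
  have : (ω.compl₁₂ (γ : V →ₗ[ZMod 2] V) (γ : V →ₗ[ZMod 2] V)) = ω := by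
    apply c.ext
    intro j
    apply c.ext
    intro k
    simp only [LinearMap.compl₁₂_apply]
    rw [show (↑γ : V →ₗ[ZMod 2] V) (c j) = d j from hγ j,
      show (↑γ : V →ₗ[ZMod 2] V) (c k) = d k from hγ k]
    exact key j k
  intro v w
  have := congrArg (fun F => F v w) this
  simpa using this

end Part1

section Planewise

variable {V : Type*} [AddCommGroup V] [Module (ZMod 2) V] {g : ℕ}
variable {ω : V →ₗ[ZMod 2] V →ₗ[ZMod 2] ZMod 2} {q : V → ZMod 2}

lemma omega_comb (x y z w : ZMod 2) (u v u' v' : V) :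
    ω (x • u + y • v) (z • u' + w • v') =
      x * z * ω u u' + x * w * ω u v' + y * z * ω v u' + y * w * ω v v' := by
  simp only [map_add, map_smul, LinearMap.add_apply, LinearMap.smul_apply, smul_eq_mul]
  ring

/-- plane-wise change of symplectic family -/
lemma planewise (hq : IsQuadraticRefinement ω q) {c : Fin g ⊕ Fin g → V}
    (hc : IsSympFam ω c) (e11 e12 e21 e22 : Fin g → ZMod 2)
    (hdet : ∀ i, e11 i * e22 i + e12 i * e21 i = 1) :
    let d : Fin g ⊕ Fin g → V := fun j =>
      match j with
      | inl i => e11 i • c (inl i) + e12 i • c (inr i)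
      | inr i => e21 i • c (inl i) + e22 i • c (inr i)
    IsSympFam ω d ∧
    (∀ i, q (d (inl i)) = e11 i * q (c (inl i)) + e12 i * q (c (inr i)) + e11 i * e12 i) ∧
    (∀ i, q (d (inr i)) = e21 i * q (c (inl i)) + e22 i * q (c (inr i)) + e21 i * e22 i) := by
  intro d
  obtain ⟨h1, h2, h3⟩ := hc
  have hsym := IQR.omega_symm hq
  have h1' : ∀ i j, ω (c (inr i)) (c (inl j)) = if j = i then 1 else 0 := by
    intro i j; rw [hsym, h1]
  have charr : ∀ a b : ZMod 2, a * b + b * a = 0 := by decide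
  refine ⟨⟨?_, ?_, ?_⟩, ?_, ?_⟩
  · intro i j
    show ω (e11 i • c (inl i) + e12 i • c (inr i)) (e21 j • c (inl j) + e22 j • c (inr j)) = _
    rw [omega_comb, h2, h1, h1', h3]
    by_cases hij : i = j
    · subst hij
      simp only [eq_self_iff_true, if_true, mul_zero, mul_one, zero_add, add_zero]
      rw [← hdet i]
    · simp only [if_neg hij, if_neg (Ne.symm hij)]
      ring
  · intro i j
    show ω (e11 i • c (inl i) + e12 i • c (inr i)) (e11 j • c (inl j) + e12 j • c (inr j)) = _
    rw [omega_comb, h2, h1, h1', h3]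
    by_cases hij : i = j
    · subst hij
      simp only [eq_self_iff_true, if_true, mul_zero, mul_one, zero_add, add_zero]
      exact charr _ _
    · simp only [if_neg hij, if_neg (Ne.symm hij)]
      ring
  · intro i j
    show ω (e21 i • c (inl i) + e22 i • c (inr i)) (e21 j • c (inl j) + e22 j • c (inr j)) = _
    rw [omega_comb, h2, h1, h1', h3]
    by_cases hij : i = j
    · subst hij
      simp only [eq_self_iff_true, if_true, mul_zero, mul_one, zero_add, add_zero]
      exact charr _ _
    · simp only [if_neg hij, if_neg (Ne.symm hij)]
      ring
  · intro i
    show q (e11 i • c (inl i) + e12 i • c (inr i)) = _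
    rw [IQR.comb hq, h1, if_pos rfl, mul_one]
  · intro i
    show q (e21 i • c (inl i) + e22 i • c (inr i)) = _
    rw [IQR.comb hq, h1, if_pos rfl, mul_one]

/-- Step 1: normalize each plane to values (p,p) with p the product. -/
lemma step1 (hq : IsQuadraticRefinement ω q) {c : Fin g ⊕ Fin g → V}
    (hc : IsSympFam ω c) :
    ∃ d : Fin g ⊕ Fin g → V, IsSympFam ω d ∧
      ∀ i, q (d (inl i)) = q (c (inl i)) * q (c (inr i)) ∧
           q (d (inr i)) = q (c (inl i)) * q (c (inr i)) := by
  set α : Fin g → ZMod 2 := fun i => q (c (inl i))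
  set β : Fin g → ZMod 2 := fun i => q (c (inr i))
  have key := planewise hq hc (fun _ => 1) (fun i => α i + α i * β i)
    (fun i => β i + α i * β i) (fun _ => 1)
    (by intro i; revert i; intro i
        have : ∀ a b : ZMod 2, 1 * 1 + (a + a * b) * (b + a * b) = 1 := by decide
        exact this (α i) (β i))
  obtain ⟨hd, hv1, hv2⟩ := key
  refine ⟨_, hd, fun i => ⟨?_, ?_⟩⟩
  · rw [hv1 i]
    have : ∀ a b : ZMod 2, 1 * a + (a + a * b) * b + 1 * (a + a * b) = a * b := by decide
    exact this (α i) (β i)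
  · rw [hv2 i]
    have : ∀ a b : ZMod 2, (b + a * b) * a + 1 * b + (b + a * b) * 1 = a * b := by decide
    exact this (α i) (β i)

end Planewise

section OpB

variable {V : Type*} [AddCommGroup V] [Module (ZMod 2) V] {g : ℕ}
variable {ω : V →ₗ[ZMod 2] V →ₗ[ZMod 2] ZMod 2} {q : V → ZMod 2}

set_option maxHeartbeats 2000000 in
/-- Cancel a pair of (1,1)-planes. -/
lemma opB (hq : IsQuadraticRefinement ω q) {c : Fin g ⊕ Fin g → V}
    (hc : IsSympFam ω c) {i j : Fin g} (hij : i ≠ j)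
    (hi1 : q (c (inl i)) = 1) (hi2 : q (c (inr i)) = 1)
    (hj1 : q (c (inl j)) = 1) (hj2 : q (c (inr j)) = 1) :
    ∃ d : Fin g ⊕ Fin g → V, IsSympFam ω d ∧
      (∀ k, k ≠ i → k ≠ j → d (inl k) = c (inl k) ∧ d (inr k) = c (inr k)) ∧
      q (d (inl i)) = 0 ∧ q (d (inr i)) = 0 ∧ q (d (inl j)) = 0 ∧ q (d (inr j)) = 0 := by
  obtain ⟨h1, h2, h3⟩ := hc
  have hsym := IQR.omega_symm hq
  have h1' : ∀ i' j', ω (c (inr i')) (c (inl j')) = if j' = i' then 1 else 0 := by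
    intro i' j'; rw [hsym, h1]
  set a1 := c (inl i); set b1 := c (inr i); set a2 := c (inl j); set b2 := c (inr j)
  refine ⟨fun k => match k with
    | inl k => if k = i then b1 + b2 else if k = j then a1 + a2 else c (inl k)
    | inr k => if k = i then b1 + a2 + b2 else if k = j then a1 + b1 + a2 else c (inr k),
    ⟨?_, ?_, ?_⟩, ?_, ?_, ?_, ?_, ?_⟩
  · intro k l
    show ω (if k = i then b1 + b2 else if k = j then a1 + a2 else c (inl k))
      (if l = i then b1 + a2 + b2 else if l = j then a1 + b1 + a2 else c (inr l))
      = if k = l then 1 else 0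
    by_cases hki : k = i <;> by_cases hkj : k = j <;>
      by_cases hli : l = i <;> by_cases hlj : l = j <;>
      (try simp_all [a1, b1, a2, b2, map_add, LinearMap.add_apply, h1, h1', h2, h3, hij,
        Ne.symm hij, show (1:ZMod 2)+1 = 0 by decide]) <;>
      (try split_ifs with hh) <;> first | simp_all | (rintro rfl; simp_all) | decide
  · intro k l
    show ω (if k = i then b1 + b2 else if k = j then a1 + a2 else c (inl k))
      (if l = i then b1 + b2 else if l = j then a1 + a2 else c (inl l))
      = 0
    by_cases hki : k = i <;> by_cases hkj : k = j <;>
      by_cases hli : l = i <;> by_cases hlj : l = j <;>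
      (try simp_all [a1, b1, a2, b2, map_add, LinearMap.add_apply, h1, h1', h2, h3, hij,
        Ne.symm hij, show (1:ZMod 2)+1 = 0 by decide]) <;>
      (try split_ifs with hh) <;> first | simp_all | (rintro rfl; simp_all) | decide
  · intro k l
    show ω (if k = i then b1 + a2 + b2 else if k = j then a1 + b1 + a2 else c (inr k))
      (if l = i then b1 + a2 + b2 else if l = j then a1 + b1 + a2 else c (inr l))
      = 0
    by_cases hki : k = i <;> by_cases hkj : k = j <;>
      by_cases hli : l = i <;> by_cases hlj : l = j <;>
      (try simp_all [a1, b1, a2, b2, map_add, LinearMap.add_apply, h1, h1', h2, h3, hij,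
        Ne.symm hij, show (1:ZMod 2)+1 = 0 by decide]) <;>
      (try split_ifs with hh) <;> first | simp_all | (rintro rfl; simp_all) | decide
  · intro k hk1 hk2
    constructor
    · show (if k = i then b1 + b2 else if k = j then a1 + a2 else c (inl k)) = c (inl k)
      rw [if_neg hk1, if_neg hk2]
    · show (if k = i then b1 + a2 + b2 else if k = j then a1 + b1 + a2 else c (inr k)) = c (inr k)
      rw [if_neg hk1, if_neg hk2]
  · show q (if i = i then b1 + b2 else if i = j then a1 + a2 else c (inl i)) = 0
    rw [if_pos rfl, hq, hi2, hj2, h3 i j]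
    decide
  · show q (if i = i then b1 + a2 + b2 else if i = j then a1 + b1 + a2 else c (inr i)) = 0
    rw [if_pos rfl, hq, hq, hi2, hj1, hj2, h1' i j, if_neg (Ne.symm hij), map_add,
      LinearMap.add_apply, h3 i j, h1 j j, if_pos rfl]
    decide
  · show q (if j = i then b1 + b2 else if j = j then a1 + a2 else c (inl j)) = 0
    rw [if_neg (Ne.symm hij), if_pos rfl, hq, hi1, hj1, h2 i j]
    decide
  · show q (if j = i then b1 + a2 + b2 else if j = j then a1 + b1 + a2 else c (inr j)) = 0
    rw [if_neg (Ne.symm hij), if_pos rfl, hq, hq, hi1, hi2, hj1, h1 i i, if_pos rfl, map_add,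
      LinearMap.add_apply, h2 i j, h1' i j, if_neg (Ne.symm hij)]
    decide

end OpB

section Reduce

variable {V : Type*} [AddCommGroup V] [Module (ZMod 2) V] {g : ℕ}
variable {ω : V →ₗ[ZMod 2] V →ₗ[ZMod 2] ZMod 2} {q : V → ZMod 2}

lemma swapFam {c : Fin g ⊕ Fin g → V} (hc : IsSympFam ω c) (σ : Equiv.Perm (Fin g)) :
    IsSympFam ω (c ∘ Sum.map σ σ) := by
  obtain ⟨h1, h2, h3⟩ := hc
  refine ⟨fun i j => ?_, fun i j => h2 _ _, fun i j => h3 _ _⟩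
  simp only [Function.comp_apply, Sum.map_inl, Sum.map_inr, h1]
  simp [σ.injective.eq_iff]

/-- Step 2: reduce values (p,p) to normal form. -/
lemma reduce (hq : IsQuadraticRefinement ω q) :
    ∀ n : ℕ, ∀ {c : Fin g ⊕ Fin g → V}, IsSympFam ω c →
      ∀ {p : Fin g → ZMod 2},
      (∀ i, q (c (inl i)) = p i ∧ q (c (inr i)) = p i) →
      (Finset.univ.filter (fun i => p i = 1)).card = n →
      ∃ d : Fin g ⊕ Fin g → V, IsSympFam ω d ∧ ∃ a : ZMod 2,
        ∀ i : Fin g, (q (d (inl i)) = if i.val = 0 then a else 0) ∧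
                     (q (d (inr i)) = if i.val = 0 then a else 0) := by
  classical
  intro n
  induction n using Nat.strong_induction_on with
  | _ n IH =>
    intro c hc p hv hn
    rcases Nat.lt_or_ge n 2 with hsmall | hbig
    · interval_cases n
      · -- all p i = 0
        have hp : ∀ i, p i = 0 := by
          intro i
          rcases zmod2_cases (p i) with h | h
          · exact h
          · exfalso
            have : i ∈ Finset.univ.filter (fun i => p i = 1) := by simp [h]
            rw [Finset.card_eq_zero.mp hn] at this
            simp at this
        exact ⟨c, hc, 0, fun i => by simp [(hv i).1, (hv i).2, hp i]⟩
      · -- one plane with p = 1, swap it to position 0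
        obtain ⟨i0, hi0⟩ := Finset.card_eq_one.mp hn
        have hp1 : p i0 = 1 := by
          have : i0 ∈ Finset.univ.filter (fun i => p i = 1) := by rw [hi0]; simp
          simpa using this
        have hp0 : ∀ k, k ≠ i0 → p k = 0 := by
          intro k hk
          rcases zmod2_cases (p k) with h | h
          · exact h
          · exfalso
            have : k ∈ Finset.univ.filter (fun i => p i = 1) := by simp [h]
            rw [hi0] at this
            exact hk (by simpa using this)
        set z : Fin g := ⟨0, i0.pos⟩
        set σ : Equiv.Perm (Fin g) := Equiv.swap i0 z
        refine ⟨c ∘ Sum.map σ σ, swapFam hc σ, 1, fun i => ?_⟩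
        have hval : p (σ i) = if i.val = 0 then 1 else 0 := by
          by_cases hiz : i = z
          · subst hiz
            simp [σ, z, Equiv.swap_apply_right, hp1]
          · have hv0 : ¬ i.val = 0 := fun h => hiz (Fin.ext h)
            rw [if_neg hv0]
            apply hp0
            intro hcon
            have : i = σ.symm i0 := by
              rw [← hcon]; simp
            rw [Equiv.symm_swap, Equiv.swap_apply_left] at this
            exact hiz this
        constructor
        · show q (c (inl (σ i))) = _
          rw [(hv (σ i)).1, hval]
        · show q (c (inr (σ i))) = _
          rw [(hv (σ i)).2, hval]
    · -- at least two planes with p = 1: cancel a pair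
      obtain ⟨i0, hi0m, j0, hj0m, hij⟩ :=
        Finset.one_lt_card.mp (by omega : 1 < (Finset.univ.filter (fun i => p i = 1)).card)
      have hpi0 : p i0 = 1 := by simpa using hi0m
      have hpj0 : p j0 = 1 := by simpa using hj0m
      obtain ⟨d, hd, hfix, hd1, hd2, hd3, hd4⟩ := opB hq hc hij
        (by rw [(hv i0).1, hpi0]) (by rw [(hv i0).2, hpi0])
        (by rw [(hv j0).1, hpj0]) (by rw [(hv j0).2, hpj0])
      set p' : Fin g → ZMod 2 := fun k => if k = i0 ∨ k = j0 then 0 else p k with hp'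
      have hv' : ∀ i, q (d (inl i)) = p' i ∧ q (d (inr i)) = p' i := by
        intro k
        by_cases hk1 : k = i0
        · subst hk1
          simp only [hp', if_pos (Or.inl rfl)]
          exact ⟨hd1, hd2⟩
        · by_cases hk2 : k = j0
          · subst hk2
            simp only [hp', if_pos (Or.inr rfl)]
            exact ⟨hd3, hd4⟩
          · obtain ⟨e1, e2⟩ := hfix k hk1 hk2
            have hcond : ¬(k = i0 ∨ k = j0) := by tauto
            simp only [hp', if_neg hcond]
            exact ⟨by rw [e1, (hv k).1], by rw [e2, (hv k).2]⟩
      have hcard : (Finset.univ.filter (fun i => p' i = 1)).card = n - 2 := by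
        have hset : Finset.univ.filter (fun i => p' i = 1) =
            (Finset.univ.filter (fun i => p i = 1)) \ {i0, j0} := by
          ext k
          simp only [Finset.mem_filter, Finset.mem_univ, true_and, Finset.mem_sdiff,
            Finset.mem_insert, Finset.mem_singleton, hp']
          constructor
          · intro h
            by_cases hk1 : k = i0
            · simp [hk1] at h
            · by_cases hk2 : k = j0
              · simp [hk2] at h
              · rw [if_neg (by tauto)] at h
                exact ⟨h, by tauto⟩
          · rintro ⟨h, hne⟩
            rw [if_neg (by tauto)]
            exact h
        rw [hset, Finset.card_sdiff_of_subset]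
        · rw [hn, Finset.card_insert_of_notMem (by simpa using hij), Finset.card_singleton]
        · intro k hk
          simp only [Finset.mem_insert, Finset.mem_singleton] at hk
          rcases hk with rfl | rfl
          · exact hi0m
          · exact hj0m
      exact IH (n - 2) (by omega) hd hv' hcard

end Reduce

section Main

variable {V : Type*} [AddCommGroup V] [Module (ZMod 2) V] {g : ℕ}
variable {ω : V →ₗ[ZMod 2] V →ₗ[ZMod 2] ZMod 2} {q : V → ZMod 2}

/-- The Arf sum over any symplectic family equals the Arf invariant over `b`. -/
lemma arf_fam (b : Basis (Fin g ⊕ Fin g) (ZMod 2) V) (hb : IsSymplecticBasis ω b)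
    (hq : IsQuadraticRefinement ω q) (hg : 0 < g) {d : Fin g ⊕ Fin g → V}
    (hd : IsSympFam ω d) :
    ∑ i : Fin g, q (d (inl i)) * q (d (inr i)) = arfInvariant b q := by
  have hsym := IQR.omega_symm hq
  set e := sympFamBasis hg b hd with he_def
  have he : ⇑e = d := sympFamBasis_coe hg b hd
  have hfame : IsSympFam ω ⇑e := by rw [he]; exact hd
  have hfamb : IsSympFam ω ⇑b := hb
  set γ0 : V ≃ₗ[ZMod 2] V := e.equiv b (Equiv.refl _) with hγ0_def
  have hγ0 : ∀ v w, ω (γ0 v) (γ0 w) = ω v w := by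
    apply symp_of_basis_map hsym e b hfame hfamb
    intro j
    simp [hγ0_def, Basis.equiv_apply]
  have h := (part1 b hb γ0 hγ0 hq).2
  have hsymm : ∀ j, γ0.symm (b j) = e j := by
    intro j
    rw [LinearEquiv.symm_apply_eq]
    simp [hγ0_def, Basis.equiv_apply]
  rw [← h]
  simp only [arfInvariant, hsymm, he]

theorem symplectic_group_orbits_are_arf_level_sets' 
    (ω : V →ₗ[ZMod 2] V →ₗ[ZMod 2] ZMod 2)
    (b : Basis (Fin g ⊕ Fin g) (ZMod 2) V)
    (hb : IsSymplecticBasis ω b) :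
    (∀ (γ : V ≃ₗ[ZMod 2] V), (∀ v w, ω (γ v) (γ w) = ω v w) →
      ∀ q : V → ZMod 2, IsQuadraticRefinement ω q →
        IsQuadraticRefinement ω (fun v => q (γ.symm v)) ∧
        arfInvariant b (fun v => q (γ.symm v)) = arfInvariant b q) ∧
    (∀ q q' : V → ZMod 2, IsQuadraticRefinement ω q → IsQuadraticRefinement ω q' →
      arfInvariant b q = arfInvariant b q' →
      ∃ γ : V ≃ₗ[ZMod 2] V, (∀ v w, ω (γ v) (γ w) = ω v w) ∧
        ∀ v, q' v = q (γ.symm v)) := by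
  classical
  refine ⟨fun γ hγ q hq => part1 b hb γ hγ hq, ?_⟩
  intro q q' hq hq' harf
  rcases Nat.eq_zero_or_pos g with hg0 | hg
  · subst hg0
    refine ⟨LinearEquiv.refl _ _, by simp, ?_⟩
    have hz : ∀ v : V, v = 0 := by
      intro v
      have h := b.equivFun.symm_apply_apply v
      rw [Basis.equivFun_symm_apply] at h
      simpa using h.symm
    intro v
    rw [hz v]
    show q' 0 = q ((LinearEquiv.refl (ZMod 2) V).symm 0)
    simp [IQR.zero hq, IQR.zero hq']
  · have hsym := IQR.omega_symm hq
    have hfb : IsSympFam ω ⇑b := hb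
    set z : Fin g := ⟨0, hg⟩ with hz_def
    have sq : ∀ x : ZMod 2, x * x = x := by decide
    have sumnf : ∀ a : ZMod 2,
        (∑ i : Fin g, (if (i : ℕ) = 0 then a else 0) * (if (i : ℕ) = 0 then a else 0)) = a := by
      intro a
      have : ∀ i : Fin g, (if (i : ℕ) = 0 then a else 0) * (if (i : ℕ) = 0 then a else 0)
          = if i = z then a else 0 := by
        intro i
        by_cases h : (i : ℕ) = 0
        · rw [if_pos h, if_pos (Fin.ext h), sq]
        · rw [if_neg h, if_neg (fun hc => h (by rw [hc]))]
          ring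
      rw [Finset.sum_congr rfl (fun i _ => this i), Finset.sum_ite_eq' Finset.univ z (fun _ => a)]
      simp
    -- reduce q
    obtain ⟨c1, hc1, hval1⟩ := step1 hq hfb
    obtain ⟨d, hd, a, hvd⟩ := reduce hq _ hc1 hval1 rfl
    obtain ⟨c1', hc1', hval1'⟩ := step1 hq' hfb
    obtain ⟨d', hd', a', hvd'⟩ := reduce hq' _ hc1' hval1' rfl
    -- both normal-form values are the Arf invariant
    have ha : a = arfInvariant b q := by
      have h := arf_fam b hb hq hg hd
      rw [← h, Finset.sum_congr rfl (fun i _ => by rw [(hvd i).1, (hvd i).2]), sumnf]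
    have ha' : a' = arfInvariant b q' := by
      have h := arf_fam b hb hq' hg hd'
      rw [← h, Finset.sum_congr rfl (fun i _ => by rw [(hvd' i).1, (hvd' i).2]), sumnf]
    have haa : a = a' := by rw [ha, ha', harf]
    -- build the symplectic map
    set eD := sympFamBasis hg b hd with heD_def
    set eD' := sympFamBasis hg b hd' with heD'_def
    have heD : ⇑eD = d := sympFamBasis_coe hg b hd
    have heD' : ⇑eD' = d' := sympFamBasis_coe hg b hd'
    have hfamD : IsSympFam ω ⇑eD := by rw [heD]; exact hd
    have hfamD' : IsSympFam ω ⇑eD' := by rw [heD']; exact hd'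
    set γ : V ≃ₗ[ZMod 2] V := eD.equiv eD' (Equiv.refl _) with hγ_def
    have hγ : ∀ v w, ω (γ v) (γ w) = ω v w := by
      apply symp_of_basis_map hsym eD eD' hfamD hfamD'
      intro j
      simp [hγ_def, Basis.equiv_apply]
    have href := (part1 b hb γ hγ hq).1
    refine ⟨γ, hγ, ?_⟩
    apply refinement_ext eD' hq' href
    intro j
    have hsymm : γ.symm (eD' j) = eD j := by
      rw [LinearEquiv.symm_apply_eq]
      simp [hγ_def, Basis.equiv_apply]
    show q' (eD' j) = q (γ.symm (eD' j))
    rw [hsymm, heD, heD']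
    cases j with
    | inl i => rw [(hvd i).1, (hvd' i).1, haa]
    | inr i => rw [(hvd i).2, (hvd' i).2, haa]

end Main

/-- The orbits of the symplectic group on quadratic forms, acting by
`(γ · q)(v) = q (γ⁻¹ v)`, are exactly the level sets of the Arf invariant:
the action preserves being a quadratic form and its Arf invariant, and it is
transitive on each of the two level sets. -/
theorem symplectic_group_orbits_are_arf_level_sets {V : Type*} [AddCommGroup V]
    [Module (ZMod 2) V] {g : ℕ}
    (ω : V →ₗ[ZMod 2] V →ₗ[ZMod 2] ZMod 2)
    (b : Basis (Fin g ⊕ Fin g) (ZMod 2) V)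
    (hb : IsSymplecticBasis ω b) :
    -- the action preserves quadratic refinements and the Arf invariant
    (∀ (γ : V ≃ₗ[ZMod 2] V), (∀ v w, ω (γ v) (γ w) = ω v w) →
      ∀ q : V → ZMod 2, IsQuadraticRefinement ω q →
        IsQuadraticRefinement ω (fun v => q (γ.symm v)) ∧
        arfInvariant b (fun v => q (γ.symm v)) = arfInvariant b q) ∧
    -- transitivity on each level set of the Arf invariant
    (∀ q q' : V → ZMod 2, IsQuadraticRefinement ω q → IsQuadraticRefinement ω q' →
      arfInvariant b q = arfInvariant b q' →
      ∃ γ : V ≃ₗ[ZMod 2] V, (∀ v w, ω (γ v) (γ w) = ω v w) ∧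
        ∀ v, q' v = q (γ.symm v)) := by
  exact symplectic_group_orbits_are_arf_level_sets' ω b hb
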